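/- The kernel integral equation has at most one continuous solution: if G¹, G² : E → ℝ are continuous and satisfy Gⁱ = G₀ + Φ_{Gⁱ} on E for i = 1,2, then G¹ = G². -/

import Mathlib

open MeasureTheory intervalIntegral

/-- The domain `E = {(ξ,η) : 0 ≤ η ≤ 1, η ≤ ξ ≤ 2-η}`. -/
def Eset : Set (ℝ × ℝ) := {q | 0 ≤ q.2 ∧ q.2 ≤ 1 ∧ q.2 ≤ q.1 ∧ q.1 ≤ 2 - q.2}

/-- `μ̃(ξ,η) = λ₀ - c₁((ξ+η)/2) + c₁((ξ-η)/2)`. -/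
noncomputable def muT (c1 : ℝ → ℝ) (lam0 ξ η : ℝ) : ℝ :=
  lam0 - c1 ((ξ + η) / 2) + c1 ((ξ - η) / 2)

/-- The integral operator `Φ_H` of the kernel integral equation. -/
noncomputable def PhiOp (c1 : ℝ → ℝ) (lam0 : ℝ) (f : ℝ → ℝ → ℝ) (H : ℝ → ℝ → ℝ)
    (ξ η : ℝ) : ℝ :=
  (1 / 4) * (∫ τ in η..ξ, ∫ s in (0:ℝ)..η, muT c1 lam0 τ s * H τ s)
    + (1 / 2) * (∫ τ in (0:ℝ)..η, ∫ s in (0:ℝ)..τ, muT c1 lam0 τ s * H τ s)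
    + (1 / 4) * (∫ z in η..ξ, ∫ s in (0:ℝ)..η, ∫ τ in z..(z + η - s),
        f ((τ - s) / 2) (z - (τ + s) / 2) * H τ s)
    + (1 / 2) * (∫ z in (0:ℝ)..η, ∫ s in (0:ℝ)..z, ∫ τ in z..(2 * z - s),
        f ((τ - s) / 2) (z - (τ + s) / 2) * H τ s)

/-- The inhomogeneous term `G₀` of the kernel integral equation. -/
noncomputable def Gzero (lam0 : ℝ) (f : ℝ → ℝ → ℝ) (ξ η : ℝ) : ℝ :=
  lam0 / 4 * (ξ + η)
    + (1 / 4) * (∫ τ in η..ξ, ∫ s in (0:ℝ)..η, f ((τ + s) / 2) ((τ - s) / 2))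
    + (1 / 2) * (∫ τ in (0:ℝ)..η, ∫ s in (0:ℝ)..τ, f ((τ + s) / 2) ((τ - s) / 2))

lemma Eset_iff {τ s : ℝ} : (τ, s) ∈ Eset ↔ 0 ≤ s ∧ s ≤ 1 ∧ s ≤ τ ∧ τ ≤ 2 - s := Iff.rfl

lemma phi_congr (c1 c1' : ℝ → ℝ) (lam0 : ℝ) (f : ℝ → ℝ → ℝ) (H H' : ℝ → ℝ → ℝ)
    (hc : ∀ x ∈ Set.Icc (0:ℝ) 1, c1 x = c1' x)
    (hH : ∀ τ s : ℝ, (τ, s) ∈ Eset → H τ s = H' τ s)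
    {ξ η : ℝ} (hE : (ξ, η) ∈ Eset) :
    PhiOp c1 lam0 f H ξ η = PhiOp c1' lam0 f H' ξ η := by
  obtain ⟨h0η, hη1, hηξ, hξ2⟩ := Eset_iff.mp hE
  have hmu : ∀ τ s : ℝ, (τ, s) ∈ Eset →
      muT c1 lam0 τ s * H τ s = muT c1' lam0 τ s * H' τ s := by
    intro τ s hm
    obtain ⟨m1, m2, m3, m4⟩ := Eset_iff.mp hm
    rw [muT, muT, hH _ _ hm, hc ((τ + s)/2) ⟨by linarith, by linarith⟩,
      hc ((τ - s)/2) ⟨by linarith, by linarith⟩]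
  have e1 : (∫ τ in η..ξ, ∫ s in (0:ℝ)..η, muT c1 lam0 τ s * H τ s)
      = ∫ τ in η..ξ, ∫ s in (0:ℝ)..η, muT c1' lam0 τ s * H' τ s := by
    refine intervalIntegral.integral_congr fun τ hτ => ?_
    rw [Set.uIcc_of_le hηξ] at hτ
    refine intervalIntegral.integral_congr fun s hs => ?_
    rw [Set.uIcc_of_le h0η] at hs
    exact hmu τ s (Eset_iff.mpr ⟨hs.1, hs.2.trans hη1, hs.2.trans hτ.1,
      by linarith [hτ.2, hs.2]⟩)
  have e2 : (∫ τ in (0:ℝ)..η, ∫ s in (0:ℝ)..τ, muT c1 lam0 τ s * H τ s)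
      = ∫ τ in (0:ℝ)..η, ∫ s in (0:ℝ)..τ, muT c1' lam0 τ s * H' τ s := by
    refine intervalIntegral.integral_congr fun τ hτ => ?_
    rw [Set.uIcc_of_le h0η] at hτ
    refine intervalIntegral.integral_congr fun s hs => ?_
    rw [Set.uIcc_of_le hτ.1] at hs
    exact hmu τ s (Eset_iff.mpr ⟨hs.1, by linarith [hs.2, hτ.2], hs.2,
      by linarith [hτ.2, hs.2, hη1]⟩)
  have e3 : (∫ z in η..ξ, ∫ s in (0:ℝ)..η, ∫ τ in z..(z + η - s),
        f ((τ - s) / 2) (z - (τ + s) / 2) * H τ s)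
      = ∫ z in η..ξ, ∫ s in (0:ℝ)..η, ∫ τ in z..(z + η - s),
        f ((τ - s) / 2) (z - (τ + s) / 2) * H' τ s := by
    refine intervalIntegral.integral_congr fun z hz => ?_
    rw [Set.uIcc_of_le hηξ] at hz
    refine intervalIntegral.integral_congr fun s hs => ?_
    rw [Set.uIcc_of_le h0η] at hs
    refine intervalIntegral.integral_congr fun τ hτ => ?_
    rw [Set.uIcc_of_le (by linarith [hs.2] : z ≤ z + η - s)] at hτ
    rw [hH τ s (Eset_iff.mpr ⟨hs.1, hs.2.trans hη1,
      by linarith [hτ.1, hz.1, hs.2], by linarith [hτ.2, hz.2]⟩)]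
  have e4 : (∫ z in (0:ℝ)..η, ∫ s in (0:ℝ)..z, ∫ τ in z..(2 * z - s),
        f ((τ - s) / 2) (z - (τ + s) / 2) * H τ s)
      = ∫ z in (0:ℝ)..η, ∫ s in (0:ℝ)..z, ∫ τ in z..(2 * z - s),
        f ((τ - s) / 2) (z - (τ + s) / 2) * H' τ s := by
    refine intervalIntegral.integral_congr fun z hz => ?_
    rw [Set.uIcc_of_le h0η] at hz
    refine intervalIntegral.integral_congr fun s hs => ?_
    rw [Set.uIcc_of_le hz.1] at hs
    refine intervalIntegral.integral_congr fun τ hτ => ?_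
    rw [Set.uIcc_of_le (by linarith [hs.2] : z ≤ 2 * z - s)] at hτ
    rw [hH τ s (Eset_iff.mpr ⟨hs.1, by linarith [hs.2, hz.2],
      by linarith [hτ.1, hs.2], by linarith [hτ.2, hz.2]⟩)]
  unfold PhiOp
  rw [e1, e2, e3, e4]

lemma double_sub (F₁ F₂ : ℝ → ℝ → ℝ)
    (h₁ : Continuous fun p : ℝ × ℝ => F₁ p.1 p.2)
    (h₂ : Continuous fun p : ℝ × ℝ => F₂ p.1 p.2)
    (a b : ℝ) (m : ℝ → ℝ) (hm : Continuous m) :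
    (∫ τ in a..b, ∫ s in (0:ℝ)..m τ, (F₁ τ s - F₂ τ s))
      = (∫ τ in a..b, ∫ s in (0:ℝ)..m τ, F₁ τ s)
        - ∫ τ in a..b, ∫ s in (0:ℝ)..m τ, F₂ τ s := by
  have c₁ : Continuous fun τ => ∫ s in (0:ℝ)..m τ, F₁ τ s :=
    intervalIntegral.continuous_parametric_intervalIntegral_of_continuous (f := F₁) h₁ hm
  have c₂ : Continuous fun τ => ∫ s in (0:ℝ)..m τ, F₂ τ s :=
    intervalIntegral.continuous_parametric_intervalIntegral_of_continuous (f := F₂) h₂ hm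
  rw [← intervalIntegral.integral_sub (c₁.intervalIntegrable a b) (c₂.intervalIntegrable a b)]
  refine intervalIntegral.integral_congr fun τ _ => ?_
  exact intervalIntegral.integral_sub
    ((h₁.comp (Continuous.prodMk_right τ)).intervalIntegrable _ _)
    ((h₂.comp (Continuous.prodMk_right τ)).intervalIntegrable _ _)

lemma triple_sub (F₁ F₂ : ℝ → ℝ → ℝ → ℝ)
    (h₁ : Continuous fun p : ℝ × ℝ × ℝ => F₁ p.1 p.2.1 p.2.2)
    (h₂ : Continuous fun p : ℝ × ℝ × ℝ => F₂ p.1 p.2.1 p.2.2)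
    (a b : ℝ) (m : ℝ → ℝ) (hm : Continuous m)
    (p q : ℝ → ℝ → ℝ)
    (hp : Continuous fun x : ℝ × ℝ => p x.1 x.2)
    (hq : Continuous fun x : ℝ × ℝ => q x.1 x.2) :
    (∫ z in a..b, ∫ s in (0:ℝ)..m z, ∫ τ in p z s..q z s, (F₁ z s τ - F₂ z s τ))
      = (∫ z in a..b, ∫ s in (0:ℝ)..m z, ∫ τ in p z s..q z s, F₁ z s τ)
        - ∫ z in a..b, ∫ s in (0:ℝ)..m z, ∫ τ in p z s..q z s, F₂ z s τ := by
  have slice : ∀ (F : ℝ → ℝ → ℝ → ℝ),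
      (Continuous fun p : ℝ × ℝ × ℝ => F p.1 p.2.1 p.2.2) →
      ∀ (z s : ℝ), Continuous fun τ => F z s τ := fun F hF z s =>
    hF.comp ((continuous_const.prodMk (continuous_const.prodMk continuous_id)))
  have inner_cont : ∀ (F : ℝ → ℝ → ℝ → ℝ),
      (Continuous fun p : ℝ × ℝ × ℝ => F p.1 p.2.1 p.2.2) →
      Continuous fun x : ℝ × ℝ => ∫ τ in p x.1 x.2..q x.1 x.2, F x.1 x.2 τ := by
    intro F hF
    have hg : Continuous (Function.uncurry fun (x : ℝ × ℝ) (τ : ℝ) => F x.1 x.2 τ) := by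
      exact hF.comp (show Continuous fun xt : (ℝ × ℝ) × ℝ => (xt.1.1, (xt.1.2, xt.2)) by
        fun_prop)
    have A : Continuous fun x : ℝ × ℝ => ∫ τ in (0:ℝ)..q x.1 x.2, F x.1 x.2 τ :=
      intervalIntegral.continuous_parametric_intervalIntegral_of_continuous
        (f := fun (x : ℝ × ℝ) (τ : ℝ) => F x.1 x.2 τ) hg hq
    have B : Continuous fun x : ℝ × ℝ => ∫ τ in (0:ℝ)..p x.1 x.2, F x.1 x.2 τ :=
      intervalIntegral.continuous_parametric_intervalIntegral_of_continuous
        (f := fun (x : ℝ × ℝ) (τ : ℝ) => F x.1 x.2 τ) hg hp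
    have e : (fun x : ℝ × ℝ => ∫ τ in p x.1 x.2..q x.1 x.2, F x.1 x.2 τ)
        = fun x : ℝ × ℝ => (∫ τ in (0:ℝ)..q x.1 x.2, F x.1 x.2 τ)
            - ∫ τ in (0:ℝ)..p x.1 x.2, F x.1 x.2 τ := by
      funext x
      exact (intervalIntegral.integral_interval_sub_left
        ((slice F hF x.1 x.2).intervalIntegrable _ _)
        ((slice F hF x.1 x.2).intervalIntegrable _ _)).symm
    rw [e]; exact A.sub B
  have mid_cont : ∀ (F : ℝ → ℝ → ℝ → ℝ),
      (Continuous fun p : ℝ × ℝ × ℝ => F p.1 p.2.1 p.2.2) →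
      Continuous fun z => ∫ s in (0:ℝ)..m z, ∫ τ in p z s..q z s, F z s τ := by
    intro F hF
    exact intervalIntegral.continuous_parametric_intervalIntegral_of_continuous
      (f := fun z s => ∫ τ in p z s..q z s, F z s τ) (inner_cont F hF) hm
  calc (∫ z in a..b, ∫ s in (0:ℝ)..m z, ∫ τ in p z s..q z s, (F₁ z s τ - F₂ z s τ))
      = ∫ z in a..b, ∫ s in (0:ℝ)..m z,
          ((∫ τ in p z s..q z s, F₁ z s τ) - ∫ τ in p z s..q z s, F₂ z s τ) := by
        refine intervalIntegral.integral_congr fun z _ => ?_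
        refine intervalIntegral.integral_congr fun s _ => ?_
        exact intervalIntegral.integral_sub ((slice F₁ h₁ z s).intervalIntegrable _ _)
          ((slice F₂ h₂ z s).intervalIntegrable _ _)
    _ = ∫ z in a..b, ((∫ s in (0:ℝ)..m z, ∫ τ in p z s..q z s, F₁ z s τ)
          - ∫ s in (0:ℝ)..m z, ∫ τ in p z s..q z s, F₂ z s τ) := by
        refine intervalIntegral.integral_congr fun z _ => ?_
        exact intervalIntegral.integral_sub
          (((inner_cont F₁ h₁).comp (Continuous.prodMk_right z)).intervalIntegrable _ _)
          (((inner_cont F₂ h₂).comp (Continuous.prodMk_right z)).intervalIntegrable _ _)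
    _ = _ := intervalIntegral.integral_sub ((mid_cont F₁ h₁).intervalIntegrable _ _)
          ((mid_cont F₂ h₂).intervalIntegrable _ _)

lemma phi_sub (c1 : ℝ → ℝ) (lam0 : ℝ) (f G₁ G₂ : ℝ → ℝ → ℝ)
    (hc1 : Continuous c1)
    (hf : Continuous fun q : ℝ × ℝ => f q.1 q.2)
    (h₁ : Continuous fun q : ℝ × ℝ => G₁ q.1 q.2)
    (h₂ : Continuous fun q : ℝ × ℝ => G₂ q.1 q.2)
    (ξ η : ℝ) :
    PhiOp c1 lam0 f (fun a b => G₁ a b - G₂ a b) ξ η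
      = PhiOp c1 lam0 f G₁ ξ η - PhiOp c1 lam0 f G₂ ξ η := by
  have hmu : Continuous fun p : ℝ × ℝ => muT c1 lam0 p.1 p.2 := by
    unfold muT; fun_prop
  have hmuG : ∀ (G : ℝ → ℝ → ℝ), (Continuous fun q : ℝ × ℝ => G q.1 q.2) →
      Continuous fun p : ℝ × ℝ => muT c1 lam0 p.1 p.2 * G p.1 p.2 :=
    fun G hG => hmu.mul hG
  have hfG : ∀ (G : ℝ → ℝ → ℝ), (Continuous fun q : ℝ × ℝ => G q.1 q.2) →
      Continuous fun p : ℝ × ℝ × ℝ =>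
        f ((p.2.2 - p.2.1) / 2) (p.1 - (p.2.2 + p.2.1) / 2) * G p.2.2 p.2.1 := by
    intro G hG
    exact (hf.comp (show Continuous fun p : ℝ × ℝ × ℝ =>
        (((p.2.2 - p.2.1) / 2), (p.1 - (p.2.2 + p.2.1) / 2)) by fun_prop)).mul
      (hG.comp (show Continuous fun p : ℝ × ℝ × ℝ => (p.2.2, p.2.1) by fun_prop))
  have e1 : (∫ τ in η..ξ, ∫ s in (0:ℝ)..η,
        (muT c1 lam0 τ s * G₁ τ s - muT c1 lam0 τ s * G₂ τ s))
      = (∫ τ in η..ξ, ∫ s in (0:ℝ)..η, muT c1 lam0 τ s * G₁ τ s)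
        - ∫ τ in η..ξ, ∫ s in (0:ℝ)..η, muT c1 lam0 τ s * G₂ τ s :=
    double_sub (fun τ s => muT c1 lam0 τ s * G₁ τ s)
      (fun τ s => muT c1 lam0 τ s * G₂ τ s) (hmuG G₁ h₁) (hmuG G₂ h₂)
      η ξ (fun _ => η) continuous_const
  have e2 : (∫ τ in (0:ℝ)..η, ∫ s in (0:ℝ)..τ,
        (muT c1 lam0 τ s * G₁ τ s - muT c1 lam0 τ s * G₂ τ s))
      = (∫ τ in (0:ℝ)..η, ∫ s in (0:ℝ)..τ, muT c1 lam0 τ s * G₁ τ s)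
        - ∫ τ in (0:ℝ)..η, ∫ s in (0:ℝ)..τ, muT c1 lam0 τ s * G₂ τ s :=
    double_sub (fun τ s => muT c1 lam0 τ s * G₁ τ s)
      (fun τ s => muT c1 lam0 τ s * G₂ τ s) (hmuG G₁ h₁) (hmuG G₂ h₂)
      0 η id continuous_id
  have e3 : (∫ z in η..ξ, ∫ s in (0:ℝ)..η, ∫ τ in z..(z + η - s),
        (f ((τ - s) / 2) (z - (τ + s) / 2) * G₁ τ s
          - f ((τ - s) / 2) (z - (τ + s) / 2) * G₂ τ s))
      = (∫ z in η..ξ, ∫ s in (0:ℝ)..η, ∫ τ in z..(z + η - s),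
          f ((τ - s) / 2) (z - (τ + s) / 2) * G₁ τ s)
        - ∫ z in η..ξ, ∫ s in (0:ℝ)..η, ∫ τ in z..(z + η - s),
          f ((τ - s) / 2) (z - (τ + s) / 2) * G₂ τ s :=
    triple_sub (fun z s τ => f ((τ - s) / 2) (z - (τ + s) / 2) * G₁ τ s)
      (fun z s τ => f ((τ - s) / 2) (z - (τ + s) / 2) * G₂ τ s)
      (hfG G₁ h₁) (hfG G₂ h₂) η ξ (fun _ => η) continuous_const
      (fun z _ => z) (fun z s => z + η - s) (by fun_prop) (by fun_prop)
  have e4 : (∫ z in (0:ℝ)..η, ∫ s in (0:ℝ)..z, ∫ τ in z..(2 * z - s),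
        (f ((τ - s) / 2) (z - (τ + s) / 2) * G₁ τ s
          - f ((τ - s) / 2) (z - (τ + s) / 2) * G₂ τ s))
      = (∫ z in (0:ℝ)..η, ∫ s in (0:ℝ)..z, ∫ τ in z..(2 * z - s),
          f ((τ - s) / 2) (z - (τ + s) / 2) * G₁ τ s)
        - ∫ z in (0:ℝ)..η, ∫ s in (0:ℝ)..z, ∫ τ in z..(2 * z - s),
          f ((τ - s) / 2) (z - (τ + s) / 2) * G₂ τ s :=
    triple_sub (fun z s τ => f ((τ - s) / 2) (z - (τ + s) / 2) * G₁ τ s)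
      (fun z s τ => f ((τ - s) / 2) (z - (τ + s) / 2) * G₂ τ s)
      (hfG G₁ h₁) (hfG G₂ h₂) 0 η id continuous_id
      (fun z _ => z) (fun z s => 2 * z - s) (by fun_prop) (by fun_prop)
  unfold PhiOp
  simp only [mul_sub]
  rw [e1, e2, e3, e4]
  ring



lemma key_bound {g h : ℝ → ℝ} {a b : ℝ} (hab : a ≤ b)
    (hle : ∀ x ∈ Set.Icc a b, |g x| ≤ h x)
    (hh : IntervalIntegrable h volume a b) :
    |∫ x in a..b, g x| ≤ ∫ x in a..b, h x := by
  by_cases hg : IntervalIntegrable g volume a b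
  · refine (intervalIntegral.abs_integral_le_integral_abs hab).trans ?_
    exact intervalIntegral.integral_mono_on hab hg.abs hh hle
  · rw [intervalIntegral.integral_undef hg, abs_zero]
    exact intervalIntegral.integral_nonneg hab fun u hu => (abs_nonneg _).trans (hle u hu)

lemma key_bound_const {g : ℝ → ℝ} {a b C : ℝ} (hab : a ≤ b)
    (hle : ∀ x ∈ Set.Icc a b, |g x| ≤ C) :
    |∫ x in a..b, g x| ≤ C * (b - a) := by
  have h := intervalIntegral.norm_integral_le_of_norm_le_const (a := a) (b := b) (C := C)
    (f := g) (fun x hx => by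
      rw [Set.uIoc_of_le hab] at hx
      exact hle x ⟨hx.1.le, hx.2⟩)
  simpa [Real.norm_eq_abs, abs_of_nonneg (sub_nonneg.2 hab)] using h

lemma abs_comb {A B C D a b c d : ℝ} (hA : |A| ≤ a) (hB : |B| ≤ b) (hC : |C| ≤ c)
    (hD : |D| ≤ d) :
    |1/4 * A + 1/2 * B + 1/4 * C + 1/2 * D| ≤ 1/4 * a + 1/2 * b + 1/4 * c + 1/2 * d := by
  have h1 : |1/4 * A + 1/2 * B + 1/4 * C + 1/2 * D|
      ≤ |1/4 * A| + |1/2 * B| + |1/4 * C| + |1/2 * D| := by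
    calc |1/4 * A + 1/2 * B + 1/4 * C + 1/2 * D|
        ≤ |1/4 * A + 1/2 * B + 1/4 * C| + |1/2 * D| := abs_add_le _ _
      _ ≤ (|1/4 * A + 1/2 * B| + |1/4 * C|) + |1/2 * D| :=
          add_le_add_left (abs_add_le _ _) _
      _ ≤ (|1/4 * A| + |1/2 * B|) + |1/4 * C| + |1/2 * D| := by
          have := abs_add_le (1/4 * A) (1/2 * B); linarith
  rw [abs_mul, abs_mul, abs_mul, abs_mul,
    show |(1/4 : ℝ)| = 1/4 by norm_num, show |(1/2 : ℝ)| = 1/2 by norm_num] at h1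
  refine h1.trans ?_
  linarith

lemma phi_bound (c1 : ℝ → ℝ) (lam0 : ℝ) (f D : ℝ → ℝ → ℝ) {C L : ℝ}
    (hC : 0 ≤ C) (hL : 0 ≤ L)
    (hf : ∀ x y : ℝ, |f x y| ≤ C)
    (hmu : ∀ τ s : ℝ, (τ, s) ∈ Eset → |muT c1 lam0 τ s| ≤ L)
    (bnd : ℝ → ℝ) (hbndc : Continuous bnd)
    (hbnd0 : ∀ s ∈ Set.Icc (0:ℝ) 1, 0 ≤ bnd s)
    (hD : ∀ τ s : ℝ, (τ, s) ∈ Eset → |D τ s| ≤ bnd s)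
    {ξ η : ℝ} (hE : (ξ, η) ∈ Eset) :
    |PhiOp c1 lam0 f D ξ η| ≤ (L + C) * ∫ s in (0:ℝ)..η, bnd s := by
  obtain ⟨h0η, hη1, hηξ, hξ2⟩ := Eset_iff.mp hE
  set I := ∫ s in (0:ℝ)..η, bnd s with hIdef
  have hbnd0' : ∀ s ∈ Set.Icc (0:ℝ) η, 0 ≤ bnd s := fun s hs =>
    hbnd0 s ⟨hs.1, hs.2.trans hη1⟩
  have hI : 0 ≤ I := intervalIntegral.integral_nonneg h0η hbnd0'
  have hIb : ∀ t ∈ Set.Icc (0:ℝ) η, (∫ s in (0:ℝ)..t, bnd s) ≤ I := by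
    intro t ht
    refine intervalIntegral.integral_mono_interval le_rfl ht.1 ht.2 ?_
      (hbndc.intervalIntegrable _ _)
    exact (ae_restrict_iff' measurableSet_Ioc).2 (Filter.Eventually.of_forall
      fun s hs => hbnd0 s ⟨hs.1.le, hs.2.trans hη1⟩)
  have hLb : ∀ a b : ℝ, IntervalIntegrable (fun s => L * bnd s) volume a b :=
    fun a b => (continuous_const.mul hbndc).intervalIntegrable _ _
  have hCb : ∀ a b : ℝ, IntervalIntegrable (fun s => C * bnd s) volume a b :=
    fun a b => (continuous_const.mul hbndc).intervalIntegrable _ _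
  -- Term 1
  have T1 : |∫ τ in η..ξ, ∫ s in (0:ℝ)..η, muT c1 lam0 τ s * D τ s| ≤ L * I * 2 := by
    have hpt : ∀ τ ∈ Set.Icc η ξ,
        |∫ s in (0:ℝ)..η, muT c1 lam0 τ s * D τ s| ≤ L * I := by
      intro τ hτ
      have h := key_bound (g := fun s => muT c1 lam0 τ s * D τ s)
        (h := fun s => L * bnd s) h0η (fun s hs => by
          have hm : (τ, s) ∈ Eset := Eset_iff.mpr ⟨hs.1, hs.2.trans hη1,
            hs.2.trans hτ.1, by linarith [hτ.2, hs.2]⟩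
          rw [abs_mul]
          exact mul_le_mul (hmu _ _ hm) (hD _ _ hm) (abs_nonneg _) hL) (hLb 0 η)
      rwa [intervalIntegral.integral_const_mul, ← hIdef] at h
    have h := key_bound_const hηξ hpt
    have h2 : ξ - η ≤ 2 := by linarith
    nlinarith [mul_nonneg hL hI]
  -- Term 2
  have T2 : |∫ τ in (0:ℝ)..η, ∫ s in (0:ℝ)..τ, muT c1 lam0 τ s * D τ s| ≤ L * I := by
    have hpt : ∀ τ ∈ Set.Icc (0:ℝ) η,
        |∫ s in (0:ℝ)..τ, muT c1 lam0 τ s * D τ s| ≤ L * I := by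
      intro τ hτ
      have h := key_bound (g := fun s => muT c1 lam0 τ s * D τ s)
        (h := fun s => L * bnd s) hτ.1 (fun s hs => by
          have hm : (τ, s) ∈ Eset := Eset_iff.mpr ⟨hs.1,
            by linarith [hs.2, hτ.2], hs.2, by linarith [hτ.2, hs.2]⟩
          rw [abs_mul]
          exact mul_le_mul (hmu _ _ hm) (hD _ _ hm) (abs_nonneg _) hL) (hLb 0 τ)
      rw [intervalIntegral.integral_const_mul] at h
      exact h.trans (mul_le_mul_of_nonneg_left (hIb τ hτ) hL)
    have h := key_bound_const h0η hpt
    nlinarith [mul_nonneg hL hI]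
  -- Term 3
  have T3 : |∫ z in η..ξ, ∫ s in (0:ℝ)..η, ∫ τ in z..(z + η - s),
      f ((τ - s) / 2) (z - (τ + s) / 2) * D τ s| ≤ C * I * 2 := by
    have hpt : ∀ z ∈ Set.Icc η ξ,
        |∫ s in (0:ℝ)..η, ∫ τ in z..(z + η - s),
          f ((τ - s) / 2) (z - (τ + s) / 2) * D τ s| ≤ C * I := by
      intro z hz
      have h := key_bound (g := fun s => ∫ τ in z..(z + η - s),
          f ((τ - s) / 2) (z - (τ + s) / 2) * D τ s)
        (h := fun s => C * bnd s) h0η (fun s hs => by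
          have hbs : 0 ≤ bnd s := hbnd0 s ⟨hs.1, hs.2.trans hη1⟩
          have hzle : z ≤ z + η - s := by linarith [hs.2]
          have h' := key_bound_const (C := C * bnd s)
            (g := fun τ => f ((τ - s) / 2) (z - (τ + s) / 2) * D τ s) hzle (fun τ hτ => by
            have hm : (τ, s) ∈ Eset := Eset_iff.mpr ⟨hs.1, hs.2.trans hη1,
              by linarith [hτ.1, hz.1, hs.2], by linarith [hτ.2, hz.2]⟩
            rw [abs_mul]
            exact mul_le_mul (hf _ _) (hD _ _ hm) (abs_nonneg _) hC)
          refine h'.trans ?_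
          have : z + η - s - z = η - s := by ring
          rw [this]
          show C * bnd s * (η - s) ≤ C * bnd s
          calc C * bnd s * (η - s) ≤ C * bnd s * 1 :=
                mul_le_mul_of_nonneg_left (by linarith [hs.1, hη1]) (mul_nonneg hC hbs)
            _ = C * bnd s := mul_one _) (hCb 0 η)
      rwa [intervalIntegral.integral_const_mul, ← hIdef] at h
    have h := key_bound_const hηξ hpt
    have h2 : ξ - η ≤ 2 := by linarith
    nlinarith [mul_nonneg hC hI]
  -- Term 4
  have T4 : |∫ z in (0:ℝ)..η, ∫ s in (0:ℝ)..z, ∫ τ in z..(2 * z - s),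
      f ((τ - s) / 2) (z - (τ + s) / 2) * D τ s| ≤ C * I := by
    have hpt : ∀ z ∈ Set.Icc (0:ℝ) η,
        |∫ s in (0:ℝ)..z, ∫ τ in z..(2 * z - s),
          f ((τ - s) / 2) (z - (τ + s) / 2) * D τ s| ≤ C * I := by
      intro z hz
      have h := key_bound (g := fun s => ∫ τ in z..(2 * z - s),
          f ((τ - s) / 2) (z - (τ + s) / 2) * D τ s)
        (h := fun s => C * bnd s) hz.1 (fun s hs => by
          have hbs : 0 ≤ bnd s := hbnd0 s ⟨hs.1, by linarith [hs.2, hz.2]⟩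
          have hzle : z ≤ 2 * z - s := by linarith [hs.2]
          have h' := key_bound_const (C := C * bnd s)
            (g := fun τ => f ((τ - s) / 2) (z - (τ + s) / 2) * D τ s) hzle (fun τ hτ => by
            have hm : (τ, s) ∈ Eset := Eset_iff.mpr ⟨hs.1,
              by linarith [hs.2, hz.2], by linarith [hτ.1, hs.2],
              by linarith [hτ.2, hz.2]⟩
            rw [abs_mul]
            exact mul_le_mul (hf _ _) (hD _ _ hm) (abs_nonneg _) hC)
          refine h'.trans ?_
          have : 2 * z - s - z = z - s := by ring
          rw [this]
          show C * bnd s * (z - s) ≤ C * bnd s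
          calc C * bnd s * (z - s) ≤ C * bnd s * 1 :=
                mul_le_mul_of_nonneg_left (by linarith [hs.1, hz.2, hη1]) (mul_nonneg hC hbs)
            _ = C * bnd s := mul_one _) (hCb 0 z)
      rw [intervalIntegral.integral_const_mul] at h
      exact h.trans (mul_le_mul_of_nonneg_left (hIb z hz) hC)
    have h := key_bound_const h0η hpt
    nlinarith [mul_nonneg hC hI]
  unfold PhiOp
  refine (abs_comb T1 T2 T3 T4).trans (le_of_eq ?_)
  ring


lemma EsetIsClosed : IsClosed Eset := by
  have h1 : IsClosed {q : ℝ × ℝ | 0 ≤ q.2} := isClosed_le continuous_const continuous_snd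
  have h2 : IsClosed {q : ℝ × ℝ | q.2 ≤ 1} := isClosed_le continuous_snd continuous_const
  have h3 : IsClosed {q : ℝ × ℝ | q.2 ≤ q.1} := isClosed_le continuous_snd continuous_fst
  have h4 : IsClosed {q : ℝ × ℝ | q.1 ≤ 2 - q.2} :=
    isClosed_le continuous_fst (continuous_const.sub continuous_snd)
  have he : Eset = {q : ℝ × ℝ | 0 ≤ q.2} ∩ ({q : ℝ × ℝ | q.2 ≤ 1} ∩
      ({q : ℝ × ℝ | q.2 ≤ q.1} ∩ {q : ℝ × ℝ | q.1 ≤ 2 - q.2})) := by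
    ext q
    simp only [Eset, Set.mem_setOf_eq, Set.mem_inter_iff]
  rw [he]
  exact h1.inter (h2.inter (h3.inter h4))

lemma EsetIsCompact : IsCompact Eset := by
  have hsub : Eset ⊆ Set.Icc (0:ℝ) 2 ×ˢ Set.Icc (0:ℝ) 1 := by
    rintro ⟨a, b⟩ hq
    obtain ⟨q1, q2, q3, q4⟩ := Eset_iff.mp hq
    exact ⟨⟨by linarith, by linarith⟩, ⟨q1, q2⟩⟩
  exact (isCompact_Icc.prod isCompact_Icc).of_isClosed_subset EsetIsClosed hsub


theorem stmt17 (c1 : ℝ → ℝ) (lam0 : ℝ) (f : ℝ → ℝ → ℝ)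
    (hc1 : ContDiffOn ℝ 1 c1 (Set.Icc 0 1))
    (hfc : Continuous (fun q : ℝ × ℝ => f q.1 q.2))
    (hfbdd : ∃ C : ℝ, ∀ x y : ℝ, |f x y| ≤ C)
    (G₁ G₂ : ℝ → ℝ → ℝ)
    (hG₁_cont : ContinuousOn (fun q : ℝ × ℝ => G₁ q.1 q.2) Eset)
    (hG₂_cont : ContinuousOn (fun q : ℝ × ℝ => G₂ q.1 q.2) Eset)
    (hG₁ : ∀ ξ η : ℝ, (ξ, η) ∈ Eset → G₁ ξ η = Gzero lam0 f ξ η + PhiOp c1 lam0 f G₁ ξ η)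
    (hG₂ : ∀ ξ η : ℝ, (ξ, η) ∈ Eset → G₂ ξ η = Gzero lam0 f ξ η + PhiOp c1 lam0 f G₂ ξ η) :
    ∀ ξ η : ℝ, (ξ, η) ∈ Eset → G₁ ξ η = G₂ ξ η := by
  obtain ⟨C, hfb⟩ := hfbdd
  have hC : 0 ≤ C := (abs_nonneg _).trans (hfb 0 0)
  -- Tietze extensions
  obtain ⟨g₁, hg₁⟩ := ContinuousMap.exists_restrict_eq EsetIsClosed
    ⟨_, hG₁_cont.restrict⟩
  obtain ⟨g₂, hg₂⟩ := ContinuousMap.exists_restrict_eq EsetIsClosed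
    ⟨_, hG₂_cont.restrict⟩
  obtain ⟨cc, hcc⟩ := ContinuousMap.exists_restrict_eq
    (isClosed_Icc (a := (0:ℝ)) (b := 1)) ⟨_, (hc1.continuousOn).restrict⟩
  have hg₁' : ∀ τ s : ℝ, (τ, s) ∈ Eset → g₁ (τ, s) = G₁ τ s := fun τ s h =>
    DFunLike.congr_fun hg₁ ⟨(τ, s), h⟩
  have hg₂' : ∀ τ s : ℝ, (τ, s) ∈ Eset → g₂ (τ, s) = G₂ τ s := fun τ s h =>
    DFunLike.congr_fun hg₂ ⟨(τ, s), h⟩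
  have hcc' : ∀ x ∈ Set.Icc (0:ℝ) 1, cc x = c1 x := fun x hx =>
    DFunLike.congr_fun hcc ⟨x, hx⟩
  set Df : ℝ → ℝ → ℝ := fun a b => g₁ (a, b) - g₂ (a, b) with hDf
  have hDfc : Continuous fun q : ℝ × ℝ => Df q.1 q.2 := g₁.continuous.sub g₂.continuous
  obtain ⟨M₀, hM₀⟩ := EsetIsCompact.exists_bound_of_continuousOn hDfc.continuousOn
  have hM0 : (0:ℝ) ≤ max M₀ 0 := le_max_right _ _
  have hMb : ∀ τ s : ℝ, (τ, s) ∈ Eset → |Df τ s| ≤ max M₀ 0 := fun τ s h => by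
    simpa [Real.norm_eq_abs] using (hM₀ (τ, s) h).trans (le_max_left M₀ 0)
  set M := max M₀ 0 with hM
  -- bound on muT cc
  obtain ⟨B₀, hB₀⟩ := (isCompact_Icc (a := (0:ℝ)) (b := 1)).exists_bound_of_continuousOn
    cc.continuous.continuousOn
  set L := |lam0| + max B₀ 0 + max B₀ 0 with hLdef
  have hL : 0 ≤ L := by positivity
  have hmub : ∀ τ s : ℝ, (τ, s) ∈ Eset → |muT cc lam0 τ s| ≤ L := by
    intro τ s h
    obtain ⟨m1, m2, m3, m4⟩ := Eset_iff.mp h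
    have m5 : (τ + s) / 2 ∈ Set.Icc (0:ℝ) 1 := ⟨by linarith, by linarith⟩
    have m6 : (τ - s) / 2 ∈ Set.Icc (0:ℝ) 1 := ⟨by linarith, by linarith⟩
    have b1' := hB₀ _ m5
    have b2' := hB₀ _ m6
    rw [Real.norm_eq_abs] at b1' b2'
    have b1 : |cc ((τ + s) / 2)| ≤ max B₀ 0 := le_trans b1' (le_max_left _ _)
    have b2 : |cc ((τ - s) / 2)| ≤ max B₀ 0 := le_trans b2' (le_max_left _ _)
    have h1 : |muT cc lam0 τ s| ≤ |lam0 - cc ((τ + s) / 2)| + |cc ((τ - s) / 2)| :=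
      abs_add_le _ _
    have h2 : |lam0 - cc ((τ + s) / 2)| ≤ |lam0| + |cc ((τ + s) / 2)| := abs_sub _ _
    rw [hLdef]
    linarith
  -- the integral equation for Df
  have hDeq : ∀ a b : ℝ, (a, b) ∈ Eset → Df a b = PhiOp cc lam0 f Df a b := by
    intro a b hE
    have e₁ : G₁ a b - G₂ a b = PhiOp c1 lam0 f G₁ a b - PhiOp c1 lam0 f G₂ a b := by
      rw [hG₁ a b hE, hG₂ a b hE]; ring
    have c₁ : PhiOp c1 lam0 f G₁ a b = PhiOp cc lam0 f (fun u v => g₁ (u, v)) a b :=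
      phi_congr c1 cc lam0 f G₁ _ (fun x hx => (hcc' x hx).symm)
        (fun τ s h => (hg₁' τ s h).symm) hE
    have c₂ : PhiOp c1 lam0 f G₂ a b = PhiOp cc lam0 f (fun u v => g₂ (u, v)) a b :=
      phi_congr c1 cc lam0 f G₂ _ (fun x hx => (hcc' x hx).symm)
        (fun τ s h => (hg₂' τ s h).symm) hE
    have s₁ : PhiOp cc lam0 f Df a b
        = PhiOp cc lam0 f (fun u v => g₁ (u, v)) a b
          - PhiOp cc lam0 f (fun u v => g₂ (u, v)) a b :=
      phi_sub cc lam0 f _ _ cc.continuous hfc g₁.continuous g₂.continuous a b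
    have : Df a b = G₁ a b - G₂ a b := by
      rw [hDf]; dsimp only; rw [hg₁' a b hE, hg₂' a b hE]
    rw [this, e₁, c₁, c₂, s₁]
  set Kr := L + C with hKr
  have hKr0 : 0 ≤ Kr := add_nonneg hL hC
  have key : ∀ n : ℕ, ∀ a b : ℝ, (a, b) ∈ Eset →
      |Df a b| ≤ M * Kr ^ n / n.factorial * b ^ n := by
    intro n
    induction n with
    | zero => intro a b h; simpa using hMb a b h
    | succ n ih =>
      intro a b hE
      have h0b : 0 ≤ b := (Eset_iff.mp hE).1
      have h := phi_bound cc lam0 f Df hC hL hfb hmub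
        (fun s => M * Kr ^ n / n.factorial * s ^ n) (by fun_prop)
        (fun s hs => mul_nonneg (by positivity) (pow_nonneg hs.1 n))
        (fun τ s hh => ih τ s hh) hE
      rw [← hDeq a b hE] at h
      have hint : (∫ s in (0:ℝ)..b, M * Kr ^ n / n.factorial * s ^ n)
          = M * Kr ^ n / n.factorial * (b ^ (n + 1) / ((n : ℝ) + 1)) := by
        rw [intervalIntegral.integral_const_mul, integral_pow]
        norm_num
      rw [hint] at h
      refine h.trans (le_of_eq ?_)
      have hfact : (((n + 1).factorial : ℕ) : ℝ) = ((n : ℝ) + 1) * (n.factorial : ℝ) := by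
        rw [Nat.factorial_succ]; push_cast; ring
      have h1 : (n.factorial : ℝ) ≠ 0 := Nat.cast_ne_zero.2 n.factorial_ne_zero
      have h2 : ((n : ℝ) + 1) ≠ 0 := by positivity
      rw [hfact, ← hKr]
      field_simp
      ring
  intro ξ η hE
  have h0 : ∀ n : ℕ, |Df ξ η| ≤ M * (Kr * η) ^ n / n.factorial := by
    intro n
    calc |Df ξ η| ≤ M * Kr ^ n / n.factorial * η ^ n := key n ξ η hE
      _ = M * (Kr * η) ^ n / n.factorial := by rw [mul_pow]; ring
  have hlim : Filter.Tendsto (fun n : ℕ => M * (Kr * η) ^ n / n.factorial)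
      Filter.atTop (nhds 0) := by
    have := (FloorSemiring.tendsto_pow_div_factorial_atTop (Kr * η)).const_mul M
    simpa [mul_div_assoc] using this
  have hle : |Df ξ η| ≤ 0 := ge_of_tendsto' hlim h0
  have hz : Df ξ η = 0 := abs_eq_zero.mp (le_antisymm hle (abs_nonneg _))
  have e1 := hg₁' ξ η hE
  have e2 := hg₂' ξ η hE
  have hz' : g₁ (ξ, η) - g₂ (ξ, η) = 0 := hz
  linarith
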